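/- Let σ and τ be relational vocabularies, φ ∈ GUF1[σ] and ψ ∈ GUF1[τ] sentences. Suppose there is no sentence χ ∈ GUF1[σ ∩ τ] such that φ ⊨ χ and χ ⊨ ψ. Then there exist a σ-structure A and a τ-structure B such that A ⊨ φ, B ⊭ ψ, and A ≡_{σ∩τ} B, i.e., A and B satisfy exactly the same sentences of GUF1[σ ∩ τ]. -/

import Mathlib

set_option autoImplicit false

/-! Relational vocabularies: a signature is a type of relation symbols together with
(positive) arities.  A vocabulary is a set of relation symbols of a signature. -/
structure Sig where
  Rel : Type
  arity : Rel → ℕ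
  arity_pos : ∀ R, 0 < arity R

namespace GFP

variable {S : Sig}

/-- Atomic formulas: equalities between variables and relational atoms.
Variables are natural numbers. -/
inductive Atom (S : Sig) : Type where
  | eq : ℕ → ℕ → Atom S
  | rel : (R : S.Rel) → (Fin (S.arity R) → ℕ) → Atom S

def Atom.vars : Atom S → Finset ℕ
  | .eq i j => {i, j}
  | .rel _ ts => Finset.image ts Finset.univ

def Atom.syms : Atom S → Set S.Rel
  | .eq _ _ => ∅
  | .rel R _ => {R}

/-- Syntax of the guarded fragment: atoms, negation, conjunction and guarded
existential quantification `exg ys α ψ`, standing for `∃ ys (α ∧ ψ)` where `α` is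
an atomic guard. -/
inductive GFml (S : Sig) : Type where
  | atom : Atom S → GFml S
  | neg : GFml S → GFml S
  | and : GFml S → GFml S → GFml S
  | exg : List ℕ → Atom S → GFml S → GFml S

namespace GFml

def freeVars : GFml S → Finset ℕ
  | atom a => a.vars
  | neg φ => φ.freeVars
  | and φ ψ => φ.freeVars ∪ ψ.freeVars
  | exg ys a φ => (a.vars ∪ φ.freeVars) \ ys.toFinset

def syms : GFml S → Set S.Rel
  | atom a => a.syms
  | neg φ => φ.syms
  | and φ ψ => φ.syms ∪ ψ.syms
  | exg _ a φ => a.syms ∪ φ.syms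

/-- Well-formedness of guarded quantification: the quantified variables and all free
variables of the body occur in the guard. -/
def WF : GFml S → Prop
  | atom _ => True
  | neg φ => φ.WF
  | and φ ψ => φ.WF ∧ ψ.WF
  | exg ys a φ => φ.WF ∧ φ.freeVars ⊆ a.vars ∧ ys.toFinset ⊆ a.vars

def QFree : GFml S → Prop
  | atom _ => True
  | neg φ => φ.QFree
  | and φ ψ => φ.QFree ∧ ψ.QFree
  | exg _ _ _ => False

/-- One-dimensionality: each guarded quantification block leaves at most one
variable free. -/
def OneDim : GFml S → Prop
  | atom _ => True
  | neg φ => φ.OneDim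
  | and φ ψ => φ.OneDim ∧ ψ.OneDim
  | exg ys a φ => φ.OneDim ∧ (freeVars (exg ys a φ)).card ≤ 1

/-- Subformulas, where a guarded quantification `∃ȳ(α ∧ ψ)` has as subformulas
itself together with the subformulas of `α ∧ ψ`. -/
def subf : GFml S → List (GFml S)
  | atom a => [atom a]
  | neg φ => neg φ :: φ.subf
  | and φ ψ => and φ ψ :: (φ.subf ++ ψ.subf)
  | exg ys a φ => exg ys a φ :: and (atom a) φ :: atom a :: φ.subf

end GFml

/-- A structure for the signature `S` with domain `D` (interpreting every relation
symbol of `S`). -/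
def Str (S : Sig) (D : Type) : Type := (R : S.Rel) → (Fin (S.arity R) → D) → Prop

def Atom.Realize {D : Type} (A : Str S D) (v : ℕ → D) : Atom S → Prop
  | .eq i j => v i = v j
  | .rel R ts => A R fun k => v (ts k)

def GFml.Realize {D : Type} (A : Str S D) (v : ℕ → D) : GFml S → Prop
  | .atom a => a.Realize A v
  | .neg φ => ¬ φ.Realize A v
  | .and φ ψ => φ.Realize A v ∧ ψ.Realize A v
  | .exg ys a φ =>
      ∃ w : ℕ → D, (∀ x, x ∉ ys → w x = v x) ∧ a.Realize A w ∧ φ.Realize A w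

/-- Relative `X`-atoms. -/
def RelAtom (X : Finset ℕ) (ψ : GFml S) : Prop :=
  ψ.freeVars = ∅ ∨
  (∃ x ∈ X, ψ.freeVars = {x}) ∨
  (∃ x ∈ X, ∃ y ∈ X, ψ = .atom (.eq x y)) ∨
  (∃ (R : S.Rel) (ts : Fin (S.arity R) → ℕ), ψ = .atom (.rel R ts) ∧ ψ.freeVars = X) ∨
  (∃ ys a χ, ψ = .exg ys a χ ∧ ψ.freeVars = X)

/-- Boolean combinations of formulas satisfying `P`. -/
inductive BoolComb (P : GFml S → Prop) : GFml S → Prop where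
  | base {φ} : P φ → BoolComb P φ
  | neg {φ} : BoolComb P φ → BoolComb P (.neg φ)
  | and {φ ψ} : BoolComb P φ → BoolComb P ψ → BoolComb P (.and φ ψ)

/-- Uniformity: every subformula is a Boolean combination of relative `X`-atoms,
where `X` is its set of free variables. -/
def GFml.Uniform (φ : GFml S) : Prop :=
  ∀ ψ ∈ φ.subf, BoolComb (RelAtom ψ.freeVars) ψ

/-- Membership in `GF[σ]`. -/
def IsGF (σ : Set S.Rel) (φ : GFml S) : Prop := φ.WF ∧ φ.syms ⊆ σ

/-- Membership in the uniform one-dimensional guarded fragment `GUF1[σ]`. -/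
def IsGUF1 (σ : Set S.Rel) (φ : GFml S) : Prop := IsGF σ φ ∧ φ.OneDim ∧ φ.Uniform

/-- Membership in the uniform guarded fragment `UGF[σ]`. -/
def IsUGF (σ : Set S.Rel) (φ : GFml S) : Prop := IsGF σ φ ∧ φ.Uniform

def GFml.Sentence (φ : GFml S) : Prop := φ.freeVars = ∅

/-- Semantic entailment `φ ⊨ ψ`. -/
def Entails (φ ψ : GFml S) : Prop :=
  ∀ (D : Type) (_ : Nonempty D) (A : Str S D) (v : ℕ → D), φ.Realize A v → ψ.Realize A v

/-- Truth of a sentence in a structure. -/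
def Sat {D : Type} (A : Str S D) (φ : GFml S) : Prop := ∀ v : ℕ → D, φ.Realize A v

def Satisfiable (φ : GFml S) : Prop :=
  ∃ (D : Type) (_ : Nonempty D) (A : Str S D), Sat A φ

/-! ### Uniform partial isomorphisms, live sets and uniform guarded bisimulations -/

/-- `p` (a finite nonempty functional and injective graph) is a uniform partial
`σ`-isomorphism between `A` and `B`: it preserves the table of (an enumeration of)
its domain, i.e. all `σ`-atoms using all elements of the domain or a single one. -/
def IsUPIso (σ : Set S.Rel) {D₁ D₂ : Type} (A : Str S D₁) (B : Str S D₂)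
    (p : Set (D₁ × D₂)) : Prop :=
  p.Finite ∧ p.Nonempty ∧
  (∀ a b b', (a, b) ∈ p → (a, b') ∈ p → b = b') ∧
  (∀ a a' b, (a, b) ∈ p → (a', b) ∈ p → a = a') ∧
  ∀ R ∈ σ, ∀ t : Fin (S.arity R) → D₁ × D₂,
    (∀ j, t j ∈ p) →
    ((∀ x ∈ p, ∃ j, t j = x) ∨ ∀ j j', t j = t j') →
    (A R (fun j => (t j).1) ↔ B R fun j => (t j).2)

/-- `σ`-live subsets of a structure: (nonempty) singletons and sets of elements of
a tuple realizing some relation in `σ`. -/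
def Live (σ : Set S.Rel) {D : Type} (A : Str S D) (X : Set D) : Prop :=
  X.Nonempty ∧
    (X.Subsingleton ∨ ∃ R ∈ σ, ∃ t : Fin (S.arity R) → D, A R t ∧ X = Set.range t)

/-- Uniform guarded `σ`-bisimulation between `A` and `B` (back and forth conditions). -/
def IsBisim (σ : Set S.Rel) {D₁ D₂ : Type} (A : Str S D₁) (B : Str S D₂)
    (Z : Set (Set (D₁ × D₂))) : Prop :=
  Z.Nonempty ∧ (∀ p ∈ Z, IsUPIso σ A B p) ∧
  (∀ p ∈ Z, ∀ a b, (a, b) ∈ p → ∀ X' : Set D₁, Live σ A X' → a ∈ X' →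
    ∃ q ∈ Z, {x | ∃ y, (x, y) ∈ q} = X' ∧ (a, b) ∈ q) ∧
  (∀ p ∈ Z, ∀ a b, (a, b) ∈ p → ∀ Y' : Set D₂, Live σ B Y' → b ∈ Y' →
    ∃ q ∈ Z, {y | ∃ x, (x, y) ∈ q} = Y' ∧ (a, b) ∈ q)

/-- Uniform guarded `σ`-bisimulation between `(A, c̄)` and `(B, d̄)`: additionally
the cover condition, i.e. some `h ∈ Z` has domain exactly `c̄` and maps `c̄` to `d̄`. -/
def IsBisimPair (σ : Set S.Rel) {D₁ D₂ : Type} (A : Str S D₁) (B : Str S D₂)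
    {n : ℕ} (c : Fin n → D₁) (d : Fin n → D₂) (Z : Set (Set (D₁ × D₂))) : Prop :=
  IsBisim σ A B Z ∧
    ∃ h ∈ Z, (∀ i, (c i, d i) ∈ h) ∧ ∀ x y, (x, y) ∈ h → ∃ i, x = c i

/-- The convention `φ(x₁,…,xₙ)`: the set of free variables of `φ` is exactly
`{x₁,…,xₙ}`, or `φ` has at most one free variable belonging to `{x₁,…,xₙ}`, or `φ`
is an equality between two of the variables `x₁,…,xₙ`.  (Variables `x₁,…,xₙ` are
represented by `0,…,n-1`.) -/
def FVConv (n : ℕ) (φ : GFml S) : Prop :=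
  φ.freeVars = Finset.range n ∨ (∃ i < n, φ.freeVars ⊆ {i}) ∨
    ∃ i < n, ∃ j < n, φ = .atom (.eq i j)

/-- `(A, c̄) ≡σ (B, d̄)`: the two pointed structures agree on all `GUF1[σ]` formulas
`φ(x₁,…,xₙ)`. -/
def GUF1EquivAt (σ : Set S.Rel) {D₁ D₂ : Type} (A : Str S D₁) (B : Str S D₂)
    {n : ℕ} (c : Fin n → D₁) (d : Fin n → D₂) : Prop :=
  ∀ φ : GFml S, IsGUF1 σ φ → FVConv n φ →
    ∀ (v : ℕ → D₁) (w : ℕ → D₂),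
      (∀ i : Fin n, v i.1 = c i) → (∀ i : Fin n, w i.1 = d i) →
      (φ.Realize A v ↔ φ.Realize B w)

/-! ### Full first-order logic and ω-saturation -/

inductive FO (S : Sig) : Type where
  | atom : Atom S → FO S
  | neg : FO S → FO S
  | and : FO S → FO S → FO S
  | ex : ℕ → FO S → FO S

def FO.freeVars : FO S → Finset ℕ
  | .atom a => a.vars
  | .neg φ => φ.freeVars
  | .and φ ψ => φ.freeVars ∪ ψ.freeVars
  | .ex x φ => φ.freeVars.erase x

def FO.syms : FO S → Set S.Rel
  | .atom a => a.syms
  | .neg φ => φ.syms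
  | .and φ ψ => φ.syms ∪ ψ.syms
  | .ex _ φ => φ.syms

def FO.Realize {D : Type} (A : Str S D) (v : ℕ → D) : FO S → Prop
  | .atom a => a.Realize A v
  | .neg φ => ¬ φ.Realize A v
  | .and φ ψ => φ.Realize A v ∧ ψ.Realize A v
  | .ex x φ => ∃ e : D, φ.Realize A (Function.update v x e)

/-- `A` is ω-saturated: every elementary type with finitely many parameters
`a : Fin n → D` (occupying the variables `m, …, m + n - 1`) and free variables among
`0, …, m - 1` which is finitely realized in `(A, a)` is realized in `(A, a)`. -/
def OmegaSaturated {D : Type} (A : Str S D) : Prop :=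
  ∀ (n m : ℕ) (a : Fin n → D) (T : Set (FO S)),
    (∀ φ ∈ T, φ.freeVars ⊆ Finset.range (m + n)) →
    (∀ T₀ : Finset (FO S), ↑T₀ ⊆ T →
      ∃ v : ℕ → D, (∀ i : Fin n, v (m + i.1) = a i) ∧ ∀ φ ∈ T₀, φ.Realize A v) →
    ∃ v : ℕ → D, (∀ i : Fin n, v (m + i.1) = a i) ∧ ∀ φ ∈ T, φ.Realize A v

/-! ### The amalgam construction -/

/-- `(a, b) ∈ Z`: some member of `Z` has domain `{a}` and maps `a` to `b`. -/
def PairInZ {D₁ D₂ : Type} (Z : Set (Set (D₁ × D₂))) (x : D₁ × D₂) : Prop :=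
  ∃ p ∈ Z, x ∈ p ∧ ∀ y ∈ p, y.1 = x.1

/-- `(ā, b̄) ∈ Z`: some member of `Z` has domain exactly `{a₁,…,aₖ}` and maps each
`aⱼ` to `bⱼ`. -/
def TupInZ {D₁ D₂ : Type} (Z : Set (Set (D₁ × D₂))) {k : ℕ} (t : Fin k → D₁ × D₂) : Prop :=
  ∃ p ∈ Z, (∀ j, t j ∈ p) ∧ ∀ y ∈ p, ∃ j, y.1 = (t j).1

def LeftGood {D₁ D₂ : Type} {k : ℕ} (t : Fin k → D₁ × D₂) : Prop :=
  ∀ i j, (t i).1 = (t j).1 → (t i).2 = (t j).2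

def RightGood {D₁ D₂ : Type} {k : ℕ} (t : Fin k → D₁ × D₂) : Prop :=
  ∀ i j, (t i).2 = (t j).2 → (t i).1 = (t j).1

/-- The domain of the amalgam: pairs `(a,b)` with `(a,b) ∈ Z`. -/
def AmDom {D₁ D₂ : Type} (Z : Set (Set (D₁ × D₂))) : Type := {x : D₁ × D₂ // PairInZ Z x}

/-- The amalgam structure built from a uniform guarded `(σ ∩ τ)`-bisimulation `Z`
between `A` and `B`. -/
def Amalgam (σ τ : Set S.Rel) {D₁ D₂ : Type} (A : Str S D₁) (B : Str S D₂)
    (Z : Set (Set (D₁ × D₂))) : Str S (AmDom Z) := fun R t =>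
  (R ∈ σ ∩ τ ∧ A R (fun j => (t j).1.1) ∧ TupInZ Z fun j => (t j).1) ∨
  (R ∈ σ \ τ ∧ A R (fun j => (t j).1.1) ∧
    (TupInZ Z (fun j => (t j).1) ∨
      (LeftGood (fun j => (t j).1) ∧
        ¬ Live (σ ∩ τ) A (Set.range fun j => (t j).1.1)))) ∨
  (R ∈ τ \ σ ∧ B R (fun j => (t j).1.2) ∧
    (TupInZ Z (fun j => (t j).1) ∨
      (RightGood (fun j => (t j).1) ∧
        ¬ Live (σ ∩ τ) B (Set.range fun j => (t j).1.2))))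

/-- `Z₁`: the projections `(ā ⊗ b̄) ↦ ā` for `σ`-live `(ā ⊗ b̄)` in the amalgam. -/
def Z1 (σ τ : Set S.Rel) {D₁ D₂ : Type} (A : Str S D₁) (B : Str S D₂)
    (Z : Set (Set (D₁ × D₂))) : Set (Set (AmDom Z × D₁)) :=
  {p | ∃ X : Set (AmDom Z), Live σ (Amalgam σ τ A B Z) X ∧
        p = (fun u : AmDom Z => (u, u.1.1)) '' X}

/-- `Z₂`: the projections `(ā ⊗ b̄) ↦ b̄` for `τ`-live `(ā ⊗ b̄)` in the amalgam. -/
def Z2 (σ τ : Set S.Rel) {D₁ D₂ : Type} (A : Str S D₁) (B : Str S D₂)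
    (Z : Set (Set (D₁ × D₂))) : Set (Set (AmDom Z × D₂)) :=
  {p | ∃ X : Set (AmDom Z), Live τ (Amalgam σ τ A B Z) X ∧
        p = (fun u : AmDom Z => (u, u.1.2)) '' X}

/-! ### Normal form for the uniform guarded fragment -/

def bigAnd : List (GFml S) → GFml S
  | [] => .atom (.eq 0 0)
  | [c] => c
  | c :: c' :: rest => .and c (bigAnd (c' :: rest))

/-- A conjunct `∃z λ(z)` (with atomic `λ` whose variable set is `{z}`),
rendered as `∃z (λ(z) ∧ λ(z))`. -/
def IsExConj (c : GFml S) : Prop :=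
  ∃ (z : ℕ) (a : Atom S), a.vars = {z} ∧ c = .exg [z] a (.atom a)

/-- An existential requirement `∀x̄(α(x̄) → ∃ȳ(β(x̄,ȳ) ∧ ψ(x̄,ȳ)))`, rendered as
`¬∃x̄(α ∧ ¬∃ȳ(β ∧ ψ))`. -/
def IsExReq (c : GFml S) : Prop :=
  ∃ (xs : List ℕ) (α : Atom S) (ys : List ℕ) (β : Atom S) (ψ : GFml S),
    xs ≠ [] ∧ ψ.QFree ∧ c = .neg (.exg xs α (.neg (.exg ys β ψ)))

/-- A universal requirement `∀x̄(κ(x̄) → (θ(x̄) → ∀ȳ(γ(x̄,ȳ) → ψ(x̄,ȳ))))`, rendered as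
`¬∃x̄(κ ∧ (θ ∧ ∃ȳ(γ ∧ ¬ψ)))`. -/
def IsUnivReq (c : GFml S) : Prop :=
  ∃ (xs : List ℕ) (κ : Atom S) (θ : GFml S) (ys : List ℕ) (γ : Atom S) (ψ : GFml S),
    xs ≠ [] ∧ θ.QFree ∧ ψ.QFree ∧
      c = .neg (.exg xs κ (.and θ (.exg ys γ (.neg ψ))))

/-- `φ` is in normal form, with list of conjuncts `L`. -/
def NormalFormWith (φ : GFml S) (L : List (GFml S)) : Prop :=
  φ = bigAnd L ∧ (∃ c ∈ L, IsExConj c) ∧ (∃ c ∈ L, IsExReq c) ∧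
    (∃ c ∈ L, IsUnivReq c) ∧ ∀ c ∈ L, IsExConj c ∨ IsExReq c ∨ IsUnivReq c

def InNormalForm (φ : GFml S) : Prop := ∃ L : List (GFml S), NormalFormWith φ L

/-- Expansions/reducts: `A` and `A'` agree on the symbols in `ρ`. -/
def AgreeOn (ρ : Set S.Rel) {D : Type} (A A' : Str S D) : Prop := ∀ R ∈ ρ, A R = A' R

/-! ### 1-types and satisfiability witnesses -/

/-- A 1-type over the signature: for each relation symbol, whether the (unique)
`{x}`-atom of that symbol is in the type. -/
def OneType (S : Sig) : Type := S.Rel → Prop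

/-- The 1-type realized by an element. -/
def tp {D : Type} (A : Str S D) (a : D) : OneType S := fun R => A R fun _ => a

/-- A 1-type contains the atomic formula `a(x)` (for `a` with a single variable). -/
def OneType.SatAtom (π : OneType S) : Atom S → Prop
  | .eq _ _ => True
  | .rel R _ => π R

/-- `(A, c)` is a `(P, π)`-witness for a normal-form sentence with conjuncts `L`. -/
def IsPWitness (L : List (GFml S)) {D : Type} (A : Str S D) (c : D)
    (P : Set (OneType S)) (π : OneType S) : Prop :=
  tp A c = π ∧
  (∀ a : D, tp A a ∈ P) ∧
  (∀ cj ∈ L, ∀ (xs : List ℕ) (α : Atom S) (ys : List ℕ) (β : Atom S) (ψ : GFml S),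
    cj = GFml.neg (.exg xs α (.neg (.exg ys β ψ))) →
    ∀ v : ℕ → D, (∃ x ∈ xs, v x = c) → α.Realize A v →
      ∃ w : ℕ → D, (∀ z, z ∉ ys → w z = v z) ∧ β.Realize A w ∧ ψ.Realize A w) ∧
  (∀ cj ∈ L, ∀ (xs : List ℕ) (κ : Atom S) (θ : GFml S) (ys : List ℕ) (γ : Atom S)
      (ψ : GFml S),
    cj = GFml.neg (.exg xs κ (.and θ (.exg ys γ (.neg ψ)))) →
    ∀ v : ℕ → D, (∃ x ∈ xs, v x = c) → κ.Realize A v → θ.Realize A v →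
      ∀ w : ℕ → D, (∀ z, z ∉ ys → w z = v z) → γ.Realize A w → ψ.Realize A w)

/-- `P` is a witness for a normal-form sentence with conjuncts `L`. -/
def IsWitnessSet (L : List (GFml S)) (P : Set (OneType S)) : Prop :=
  (∀ cj ∈ L, ∀ (z : ℕ) (a : Atom S), cj = GFml.exg [z] a (.atom a) →
    ∃ π ∈ P, π.SatAtom a) ∧
  (∀ π ∈ P, ∃ (D : Type) (_ : Nonempty D) (A : Str S D) (c : D), IsPWitness L A c P π)

end GFP
namespace GFP
open FirstOrder Language

variable {S : Sig}

/-- The Mathlib first-order language corresponding to `S`. -/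
def Lng (S : Sig) : Language :=
  ⟨fun _ => Empty, fun n => {R : S.Rel // S.arity R = n}⟩

/-- The structure induced by a `(Lng S)`-structure. -/
def strOf (M : Type) [(Lng S).Structure M] : Str S M :=
  fun R t => Structure.RelMap (L := Lng S) (⟨R, rfl⟩ : {R' : S.Rel // S.arity R' = S.arity R}) t

/-- Translation of atoms. -/
noncomputable def atomF : Atom S → (Lng S).Formula ℕ
  | .eq i j => Term.equal (Term.var i) (Term.var j)
  | .rel R ts => Relations.formula (⟨R, rfl⟩ : {R' : S.Rel // S.arity R' = S.arity R})
      (fun k => Term.var (ts k))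

def quantMap (ys : List ℕ) (x : ℕ) : ℕ ⊕ Fin ys.length :=
  if h : x ∈ ys then Sum.inr ⟨ys.idxOf x, List.idxOf_lt_length_iff.2 h⟩ else Sum.inl x

/-- Translation of guarded formulas into Mathlib first-order formulas. -/
noncomputable def toF : GFml S → (Lng S).Formula ℕ
  | .atom a => atomF a
  | .neg φ => (toF φ).not
  | .and φ ψ => toF φ ⊓ toF ψ
  | .exg ys a φ => Formula.iExs (Fin ys.length) ((atomF a ⊓ toF φ).relabel (quantMap ys))

theorem realize_atomF {M : Type} [(Lng S).Structure M] (v : ℕ → M) (a : Atom S) :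
    (atomF a).Realize v ↔ a.Realize (strOf M) v := by
  cases a with
  | eq i j => simp [atomF, Atom.Realize]
  | rel R ts => simp [atomF, Atom.Realize, strOf, Formula.realize_rel]; exact Formula.realize_rel

theorem realize_toF {M : Type} [(Lng S).Structure M] (φ : GFml S) :
    ∀ v : ℕ → M, (toF φ).Realize v ↔ φ.Realize (strOf M) v := by
  induction φ with
  | atom a => exact fun v => realize_atomF v a
  | neg φ ih =>
      intro v
      rw [toF]
      simp only [Formula.realize_not, ih v]
      rfl
  | and φ ψ ih₁ ih₂ =>
      intro v
      rw [toF]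
      simp only [Formula.realize_inf, ih₁ v, ih₂ v]
      rfl
  | exg ys a φ ih =>
      intro v
      rw [toF, Formula.realize_iExs]; simp only [Formula.realize_relabel]
      show _ ↔ ∃ w : ℕ → M, (∀ x, x ∉ ys → w x = v x) ∧
        a.Realize (strOf M) w ∧ φ.Realize (strOf M) w
      constructor
      · rintro ⟨i, hi⟩
        rw [Formula.realize_inf] at hi
        refine ⟨fun x => Sum.elim v i (quantMap ys x), fun x hx => by simp [quantMap, hx], ?_, ?_⟩
        · exact (realize_atomF _ a).1 hi.1
        · exact (ih _).1 hi.2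
      · rintro ⟨w, hw, ha, hφ⟩
        refine ⟨fun j => w (ys.get j), ?_⟩
        rw [Formula.realize_inf]
        have hkey : (fun x => Sum.elim v (fun j => w (ys.get j)) (quantMap ys x)) = w := by
          funext x
          by_cases hx : x ∈ ys
          · simp only [quantMap, dif_pos hx, Sum.elim_inr]
            exact congrArg w (List.idxOf_get _)
          · simp only [quantMap, dif_neg hx, Sum.elim_inl]
            exact (hw x hx).symm
        rw [Function.comp_def, hkey]
        exact ⟨(realize_atomF w a).2 ha, (ih w).2 hφ⟩

end GFP
namespace GFP
open FirstOrder Language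

variable {S : Sig}

/-- A `(Lng S)`-structure from a `Str S D`. -/
def strToStructure {D : Type} (A : Str S D) : (Lng S).Structure D where
  funMap := fun f _ => f.elim
  RelMap := fun {n} R t => A R.1 (fun i => t (Fin.cast R.2 i))

theorem strOf_strToStructure {D : Type} (A : Str S D) :
    @strOf S D (strToStructure A) = A := by
  funext R t
  rfl

/-- Translation to sentences with constants. -/
noncomputable def toSent (χ : GFml S) : ((Lng S)[[ℕ]]).Sentence :=
  Formula.equivSentence (toF χ)

theorem models_of_realize {D : Type} (ne : Nonempty D) (A : Str S D) (v : ℕ → D)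
    (Γ : Set (GFml S)) (hΓ : ∀ χ ∈ Γ, χ.Realize A v) :
    Theory.IsSatisfiable (toSent '' Γ) := by
  letI i1 : (Lng S).Structure D := strToStructure A
  letI i2 : (constantsOn ℕ).Structure D := constantsOn.structure v
  have hconst : ∀ n : ℕ, ((Lng S).con n : D) = v n := fun n => rfl
  have hmod : D ⊨ (toSent '' Γ) := by
    rw [Theory.model_iff]
    rintro s ⟨χ, hχ, rfl⟩
    rw [toSent, Formula.realize_equivSentence]
    have : (fun a : ℕ => ((Lng S).con a : D)) = v := funext hconst
    rw [this, realize_toF, strOf_strToStructure]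
    exact hΓ χ hχ
  exact ⟨⟨D⟩⟩

theorem realize_of_models (Γ : Set (GFml S))
    (h : Theory.IsSatisfiable (toSent '' Γ)) :
    ∃ (D : Type) (_ : Nonempty D) (A : Str S D) (v : ℕ → D), ∀ χ ∈ Γ, χ.Realize A v := by
  obtain ⟨M⟩ := h
  letI i1 : (Lng S).Structure M :=
    ⟨fun f => Structure.funMap (L := (Lng S)[[ℕ]]) (Sum.inl f),
     fun R => Structure.RelMap (L := (Lng S)[[ℕ]]) (Sum.inl R)⟩
  letI iexp : ((Lng S).lhomWithConstants ℕ).IsExpansionOn M :=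
    ⟨fun _ _ => rfl, fun _ _ => rfl⟩
  refine ⟨M, inferInstance, strOf M, fun a => ((Lng S).con a : M), ?_⟩
  intro χ hχ
  have := M.is_model.realize_of_mem (φ := toSent χ) (Set.mem_image_of_mem _ hχ)
  rw [toSent, Formula.realize_equivSentence] at this
  rw [← realize_toF]
  exact this

/-- Compactness, phrased for guarded formulas. -/
theorem gf_compactness (Γ : Set (GFml S))
    (hfin : ∀ l : List (GFml S), (∀ χ ∈ l, χ ∈ Γ) →
      ∃ (D : Type) (_ : Nonempty D) (A : Str S D) (v : ℕ → D), ∀ χ ∈ l, χ.Realize A v) :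
    ∃ (D : Type) (_ : Nonempty D) (A : Str S D) (v : ℕ → D), ∀ χ ∈ Γ, χ.Realize A v := by
  apply realize_of_models
  rw [Theory.isSatisfiable_iff_isFinitelySatisfiable]
  intro T0 hT0
  have hch : ∀ s ∈ T0, ∃ χ, χ ∈ Γ ∧ toSent χ = s := by
    intro s hs
    obtain ⟨χ, hχ, hχs⟩ := hT0 hs
    exact ⟨χ, hχ, hχs⟩
  classical
  set l : List (GFml S) := T0.attach.toList.map (fun s => (hch s.1 s.2).choose) with hl
  obtain ⟨D, ne, A, v, hall⟩ := hfin l (by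
    intro χ hχ
    rw [hl, List.mem_map] at hχ
    obtain ⟨s, _, rfl⟩ := hχ
    exact (hch s.1 s.2).choose_spec.1)
  refine (models_of_realize ne A v {χ | χ ∈ l} ?_).mono ?_
  · intro χ hχ
    exact hall χ hχ
  · rintro s hs
    refine ⟨(hch s hs).choose, ?_, (hch s hs).choose_spec.2⟩
    show _ ∈ l
    rw [hl, List.mem_map]
    exact ⟨⟨s, hs⟩, by simp, rfl⟩
end GFP
namespace GFP

variable {S : Sig}

theorem Atom.realize_congr {D : Type} (A : Str S D) {v w : ℕ → D} (a : Atom S)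
    (h : ∀ x ∈ a.vars, v x = w x) : a.Realize A v ↔ a.Realize A w := by
  cases a with
  | eq i j =>
      have h1 := h i (by simp [Atom.vars])
      have h2 := h j (by simp [Atom.vars])
      simp only [Atom.Realize, h1, h2]
  | rel R ts =>
      have : (fun k => v (ts k)) = fun k => w (ts k) :=
        funext fun k => h _ (by simp [Atom.vars])
      simp only [Atom.Realize, this]

theorem GFml.realize_congr {D : Type} (A : Str S D) (φ : GFml S) :
    ∀ {v w : ℕ → D}, (∀ x ∈ φ.freeVars, v x = w x) →
      (φ.Realize A v ↔ φ.Realize A w) := by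
  induction φ with
  | atom a => exact fun h => Atom.realize_congr A a h
  | neg φ ih => exact fun h => not_congr (ih h)
  | and φ ψ ih₁ ih₂ =>
      intro v w h
      exact and_congr (ih₁ fun x hx => h x (by simp [GFml.freeVars]; exact Or.inl hx))
        (ih₂ fun x hx => h x (by simp [GFml.freeVars]; exact Or.inr hx))
  | exg ys a φ ih =>
      have key : ∀ {v w : ℕ → D}, (∀ x ∈ (GFml.exg ys a φ).freeVars, v x = w x) →
          (GFml.exg ys a φ).Realize A v → (GFml.exg ys a φ).Realize A w := by
        rintro v w h ⟨u, hu, ha, hφ⟩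
        classical
        refine ⟨fun x => if x ∈ ys then u x else w x, fun x hx => if_neg hx, ?_, ?_⟩
        · rw [← Atom.realize_congr A a (v := u)]
          · exact ha
          · intro x hx
            by_cases hxy : x ∈ ys
            · rw [if_pos hxy]
            · rw [if_neg hxy, ← h x (by
                simp only [GFml.freeVars, Finset.mem_sdiff, Finset.mem_union,
                  List.mem_toFinset]
                exact ⟨Or.inl hx, hxy⟩)]
              exact hu x hxy
        · rw [← ih (v := u)]
          · exact hφ
          · intro x hx
            by_cases hxy : x ∈ ys
            · rw [if_pos hxy]
            · rw [if_neg hxy, ← h x (by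
                simp only [GFml.freeVars, Finset.mem_sdiff, Finset.mem_union,
                  List.mem_toFinset]
                exact ⟨Or.inr hx, hxy⟩)]
              exact hu x hxy
      intro v w h
      exact ⟨key h, key (fun x hx => (h x hx).symm)⟩

theorem sat_of_realize {D : Type} {A : Str S D} {χ : GFml S} (hs : χ.Sentence)
    {v : ℕ → D} (hr : χ.Realize A v) : Sat A χ := by
  intro v'
  rw [GFml.realize_congr A χ (w := v)]
  · exact hr
  · intro x hx
    rw [GFml.Sentence] at hs
    rw [hs] at hx
    exact absurd hx (Finset.notMem_empty x)

theorem mem_subf_self (φ : GFml S) : φ ∈ φ.subf := by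
  cases φ <;> simp [GFml.subf]

theorem guf1_neg {σ' : Set S.Rel} {χ : GFml S} (h : IsGUF1 σ' χ) :
    IsGUF1 σ' (.neg χ) := by
  obtain ⟨⟨hwf, hsy⟩, hod, hun⟩ := h
  refine ⟨⟨hwf, hsy⟩, hod, ?_⟩
  intro ψ hψ
  rw [GFml.subf, List.mem_cons] at hψ
  rcases hψ with rfl | hψ
  · exact BoolComb.neg (hun χ (mem_subf_self χ))
  · exact hun ψ hψ

theorem sentence_neg {χ : GFml S} (h : χ.Sentence) : (GFml.neg χ).Sentence := h

theorem guf1_and {σ' : Set S.Rel} {χ₁ χ₂ : GFml S} (h₁ : IsGUF1 σ' χ₁)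
    (h₂ : IsGUF1 σ' χ₂) (s₁ : χ₁.Sentence) (s₂ : χ₂.Sentence) :
    IsGUF1 σ' (.and χ₁ χ₂) ∧ (GFml.and χ₁ χ₂).Sentence := by
  obtain ⟨⟨hwf₁, hsy₁⟩, hod₁, hun₁⟩ := h₁
  obtain ⟨⟨hwf₂, hsy₂⟩, hod₂, hun₂⟩ := h₂
  rw [GFml.Sentence] at s₁ s₂
  have hfv : (GFml.and χ₁ χ₂).freeVars = ∅ := by
    rw [GFml.freeVars, s₁, s₂, Finset.union_empty]
  have hwf : (χ₁.and χ₂).WF := ⟨hwf₁, hwf₂⟩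
  have hod : (χ₁.and χ₂).OneDim := ⟨hod₁, hod₂⟩
  have hsy : (χ₁.and χ₂).syms ⊆ σ' := Set.union_subset hsy₁ hsy₂
  refine ⟨⟨⟨hwf, hsy⟩, hod, ?_⟩, hfv⟩
  intro ψ hψ
  rw [GFml.subf, List.mem_cons, List.mem_append] at hψ
  rcases hψ with rfl | hψ | hψ
  · have b₁ := hun₁ χ₁ (mem_subf_self χ₁)
    have b₂ := hun₂ χ₂ (mem_subf_self χ₂)
    rw [s₁] at b₁
    rw [s₂] at b₂
    rw [hfv]
    exact BoolComb.and b₁ b₂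
  · exact hun₁ ψ hψ
  · exact hun₂ ψ hψ

end GFP
namespace GFP

variable {S : Sig}

/-- A trivially valid `GUF1[∅]` sentence: `∃x (x = x ∧ x = x)`. -/
def chiT : GFml S := .exg [0] (.eq 0 0) (.atom (.eq 0 0))

theorem chiT_realize {D : Type} (A : Str S D) (v : ℕ → D) :
    (chiT : GFml S).Realize A v :=
  ⟨v, fun _ _ => rfl, rfl, rfl⟩

theorem chiT_fv : (chiT : GFml S).freeVars = ∅ := by
  simp [chiT, GFml.freeVars, Atom.vars]

theorem chiT_sentence : (chiT : GFml S).Sentence := chiT_fv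

theorem eqatom_fv : (GFml.atom (.eq 0 0) : GFml S).freeVars = {0} := by
  simp [GFml.freeVars, Atom.vars]

theorem chiT_guf1 (σ' : Set S.Rel) : IsGUF1 σ' (chiT : GFml S) := by
  refine ⟨⟨?_, ?_⟩, ?_, ?_⟩
  · refine ⟨trivial, ?_, ?_⟩
    · rw [eqatom_fv]
      simp [Atom.vars]
    · simp [Atom.vars]
  · simp [GFml.syms, chiT, Atom.syms]
  · refine ⟨trivial, ?_⟩
    have : (GFml.exg [0] (Atom.eq 0 0) (GFml.atom (Atom.eq 0 0)) : GFml S).freeVars = ∅ :=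
      chiT_fv
    rw [this]
    simp
  · intro ψ hψ
    have hra : RelAtom ({0} : Finset ℕ) (GFml.atom (.eq 0 0) : GFml S) :=
      Or.inr (Or.inl ⟨0, Finset.mem_singleton_self 0, eqatom_fv⟩)
    simp only [chiT, GFml.subf, List.mem_cons, List.not_mem_nil, or_false] at hψ
    rcases hψ with rfl | rfl | rfl | rfl
    · refine BoolComb.base (Or.inl chiT_fv)
    · have hfv : (GFml.and (.atom (.eq 0 0)) (.atom (.eq 0 0)) : GFml S).freeVars = {0} := by
        simp [GFml.freeVars, Atom.vars]
      rw [show (GFml.and (.atom (.eq 0 0)) (.atom (.eq 0 0)) : GFml S).freeVars = {0} from hfv]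
      exact BoolComb.and (BoolComb.base hra) (BoolComb.base hra)
    · rw [show (GFml.atom (.eq 0 0) : GFml S).freeVars = {0} from eqatom_fv]
      exact BoolComb.base hra
    · rw [show (GFml.atom (.eq 0 0) : GFml S).freeVars = {0} from eqatom_fv]
      exact BoolComb.base hra

/-- Finite conjunction with `chiT` as the empty conjunction. -/
def conjList : List (GFml S) → GFml S
  | [] => chiT
  | c :: l => .and c (conjList l)

theorem conjList_guf1 (σ' : Set S.Rel) (l : List (GFml S))
    (h : ∀ c ∈ l, IsGUF1 σ' c ∧ c.Sentence) :
    IsGUF1 σ' (conjList l) ∧ (conjList l).Sentence := by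
  induction l with
  | nil => exact ⟨chiT_guf1 σ', chiT_sentence⟩
  | cons c l ih =>
      have hc := h c (List.mem_cons_self)
      have hl := ih fun c' hc' => h c' (List.mem_cons_of_mem c hc')
      exact guf1_and hc.1 hl.1 hc.2 hl.2

theorem conjList_realize {D : Type} (A : Str S D) (v : ℕ → D) (l : List (GFml S)) :
    (conjList l).Realize A v ↔ ∀ c ∈ l, c.Realize A v := by
  induction l with
  | nil => simp [conjList, chiT_realize A v]
  | cons c l ih =>
      show c.Realize A v ∧ (conjList l).Realize A v ↔ _
      rw [ih]
      simp

end GFP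
open GFP in
/-- If there is no `GUF1[σ ∩ τ]` interpolant between the sentences
`φ ∈ GUF1[σ]` and `ψ ∈ GUF1[τ]`, then there are a `σ`-structure `A` and a
`τ`-structure `B` with `A ⊨ φ`, `B ⊭ ψ` which satisfy the same `GUF1[σ ∩ τ]`
sentences. -/
theorem no_interpolant_gives_equivalent_models (S : Sig) (σ τ : Set S.Rel)
    (φ ψ : GFml S) (hφ : IsGUF1 σ φ) (hφs : φ.Sentence)
    (hψ : IsGUF1 τ ψ) (hψs : ψ.Sentence)
    (h : ¬ ∃ χ : GFml S, IsGUF1 (σ ∩ τ) χ ∧ χ.Sentence ∧ Entails φ χ ∧ Entails χ ψ) :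
    ∃ (D₁ : Type) (_ : Nonempty D₁) (A : Str S D₁)
      (D₂ : Type) (_ : Nonempty D₂) (B : Str S D₂),
      Sat A φ ∧ ¬ Sat B ψ ∧
      ∀ χ : GFml S, IsGUF1 (σ ∩ τ) χ → χ.Sentence → (Sat A χ ↔ Sat B χ) := by
  classical
  set Γ : Set (GFml S) :=
    {χ | IsGUF1 (σ ∩ τ) χ ∧ χ.Sentence ∧ Entails φ χ} with hΓdef
  -- Step 1: a model of ¬ψ together with all consequences of φ in GUF1[σ ∩ τ].
  have hB : ∃ (D : Type) (_ : Nonempty D) (B : Str S D) (v : ℕ → D),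
      ∀ χ ∈ insert (GFml.neg ψ) Γ, χ.Realize B v := by
    apply gf_compactness
    intro l hl
    set l' : List (GFml S) := l.filter (fun c => c ≠ GFml.neg ψ) with hl'def
    have hl'Γ : ∀ c ∈ l', c ∈ Γ := by
      intro c hc
      rw [hl'def, List.mem_filter, decide_eq_true_eq] at hc
      rcases hl c hc.1 with hceq | hcΓ
      · exact absurd hceq hc.2
      · exact hcΓ
    have hGS := conjList_guf1 (σ ∩ τ) l' (fun c hc => ⟨(hl'Γ c hc).1, (hl'Γ c hc).2.1⟩)
    by_contra hno
    apply h
    refine ⟨conjList l', hGS.1, hGS.2, ?_, ?_⟩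
    · intro D ne A v hφv
      rw [conjList_realize]
      intro c hc
      exact (hl'Γ c hc).2.2 D ne A v hφv
    · intro D ne A v hcv
      by_contra hψv
      apply hno
      refine ⟨D, ne, A, v, ?_⟩
      intro c hc
      by_cases hceq : c = GFml.neg ψ
      · rw [hceq]
        exact hψv
      · refine (conjList_realize A v l').1 hcv c ?_
        rw [hl'def, List.mem_filter, decide_eq_true_eq]
        exact ⟨hc, hceq⟩
  obtain ⟨D₂, ne₂, Bst, vB, hB⟩ := hB
  have hBψ : ¬ ψ.Realize Bst vB := hB (GFml.neg ψ) (Set.mem_insert _ _)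
  have hBΓ : ∀ χ ∈ Γ, χ.Realize Bst vB := fun χ hχ =>
    hB χ (Set.mem_insert_of_mem _ hχ)
  set Δ : Set (GFml S) :=
    {χ | IsGUF1 (σ ∩ τ) χ ∧ χ.Sentence ∧ χ.Realize Bst vB} with hΔdef
  -- Step 2: a model of φ together with the GUF1[σ ∩ τ]-theory of B.
  have hA : ∃ (D : Type) (_ : Nonempty D) (A : Str S D) (v : ℕ → D),
      ∀ χ ∈ insert φ Δ, χ.Realize A v := by
    apply gf_compactness
    intro l hl
    set l' : List (GFml S) := l.filter (fun c => c ≠ φ) with hl'def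
    have hl'Δ : ∀ c ∈ l', c ∈ Δ := by
      intro c hc
      rw [hl'def, List.mem_filter, decide_eq_true_eq] at hc
      rcases hl c hc.1 with hceq | hcΔ
      · exact absurd hceq hc.2
      · exact hcΔ
    have hGS := conjList_guf1 (σ ∩ τ) l' (fun c hc => ⟨(hl'Δ c hc).1, (hl'Δ c hc).2.1⟩)
    by_contra hno
    have hmem : GFml.neg (conjList l') ∈ Γ := by
      refine ⟨guf1_neg hGS.1, sentence_neg hGS.2, ?_⟩
      intro D ne A v hφv
      show ¬ (conjList l').Realize A v
      intro hcv
      apply hno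
      refine ⟨D, ne, A, v, ?_⟩
      intro c hc
      by_cases hceq : c = φ
      · rw [hceq]
        exact hφv
      · refine (conjList_realize A v l').1 hcv c ?_
        rw [hl'def, List.mem_filter, decide_eq_true_eq]
        exact ⟨hc, hceq⟩
    have hcontr := hBΓ _ hmem
    exact hcontr ((conjList_realize Bst vB l').2 fun c hc => (hl'Δ c hc).2.2)
  obtain ⟨D₁, ne₁, Ast, vA, hA⟩ := hA
  have hAφ : φ.Realize Ast vA := hA φ (Set.mem_insert _ _)
  have hAΔ : ∀ χ ∈ Δ, χ.Realize Ast vA := fun χ hχ =>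
    hA χ (Set.mem_insert_of_mem _ hχ)
  refine ⟨D₁, ne₁, Ast, D₂, ne₂, Bst, sat_of_realize hφs hAφ, ?_, ?_⟩
  · intro hs
    exact hBψ (hs vB)
  · intro χ hχ hχs
    by_cases hb : χ.Realize Bst vB
    · have ha := hAΔ χ ⟨hχ, hχs, hb⟩
      exact iff_of_true (sat_of_realize hχs ha) (sat_of_realize hχs hb)
    · have ha := hAΔ (GFml.neg χ) ⟨guf1_neg hχ, sentence_neg hχs, hb⟩
      exact iff_of_false (fun hs => ha (hs vA)) (fun hs => hb (hs vB))
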